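/- Let X be a finite indecomposable cycle set whose permutation group G(X) is cyclic, generated by α ∈ Sym(X). Then σ_{α^{|σ(X)|}(x)} = σ_x for every x ∈ X, and |σ(X)| is the minimal positive integer n with σ_{α^n(x)} = σ_x. -/

import Mathlib

/-- A cycle set: a set with bijective left multiplications `σ x`
satisfying `(x·y)·(x·z) = (y·x)·(y·z)`. -/
structure CycleSet (X : Type*) where
  σ : X → Equiv.Perm X
  cycl : ∀ x y z : X, σ (σ x y) (σ x z) = σ (σ y x) (σ y z)

namespace CycleSet

variable {X Y : Type*}

/-- The permutation group generated by the left multiplications. -/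
def permGroup (S : CycleSet X) : Subgroup (Equiv.Perm X) :=
  Subgroup.closure (Set.range S.σ)

/-- Indecomposability: the permutation group acts transitively. -/
def Transitive (S : CycleSet X) : Prop :=
  ∀ x y : X, ∃ g ∈ S.permGroup, g x = y

/-- The permutation group is abelian. -/
def AbelianPerm (S : CycleSet X) : Prop :=
  ∀ g ∈ S.permGroup, ∀ h ∈ S.permGroup, g * h = h * g

/-- `rel S n x y` holds iff `x` and `y` become equal in the `n`-th iterated
retraction `σ^n(X)`. -/
def rel (S : CycleSet X) : ℕ → X → X → Prop
  | 0 => Eq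
  | n + 1 => fun x y => ∀ z, S.rel n (S.σ x z) (S.σ y z)

/-- The cardinality `|σ^n(X)|` of the `n`-th iterated retraction. -/
noncomputable def retCard (S : CycleSet X) (n : ℕ) : ℕ :=
  Nat.card (Quot (S.rel n))

/-- `X` is multipermutational of level `m`: `m` is minimal with `|σ^m(X)| = 1`. -/
def MultipermLevel (S : CycleSet X) (m : ℕ) : Prop :=
  (∀ x y, S.rel m x y) ∧ ∀ k < m, ¬ (∀ x y, S.rel k x y)

/-- Isomorphism of cycle sets. -/
def Isomorphic (S : CycleSet X) (T : CycleSet Y) : Prop :=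
  ∃ F : X → Y, Function.Bijective F ∧ ∀ x y, F (S.σ x y) = T.σ (F x) (F y)

namespace AuxStmt3

lemma sigma_formula (S : CycleSet X) (x y : X) :
    S.σ (S.σ y x) = S.σ (S.σ x y) * S.σ x * (S.σ y)⁻¹ := by
  ext w
  have h := S.cycl x y ((S.σ y)⁻¹ w)
  simpa using h.symm

lemma key (S : CycleSet X) [Finite X] :
    ∀ g ∈ S.permGroup, ∀ x x', S.σ x = S.σ x' → S.σ (g x) = S.σ (g x') := by
  intro g hg
  induction hg using Subgroup.closure_induction with
  | mem s hs =>
    obtain ⟨y, rfl⟩ := hs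
    intro x x' h
    have h1 := sigma_formula S x y
    have h2 := sigma_formula S x' y
    rw [h1, h2, h]
  | one => intro x x' h; simpa using h
  | mul a b _ _ ha hb =>
    intro x x' h
    have := ha (b x) (b x') (hb x x' h)
    simpa using this
  | inv a ha hp =>
    have hpow : ∀ k : ℕ, ∀ x x', S.σ x = S.σ x' → S.σ ((a ^ k) x) = S.σ ((a ^ k) x') := by
      intro k
      induction k with
      | zero => intro x x' h; simpa using h
      | succ k ih =>
        intro x x' h
        have := ih (a x) (a x') (hp x x' h)
        have e : ∀ z, (a ^ (k + 1)) z = (a ^ k) (a z) := by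
          intro z; rw [pow_succ]; rfl
        rw [e, e]; exact this
    intro x x' h
    have ho : orderOf a ≠ 0 := by
      exact (orderOf_pos a).ne'
    have hinv : a⁻¹ = a ^ (orderOf a - 1) := by
      rw [eq_comm, eq_inv_iff_mul_eq_one, ← pow_succ, Nat.sub_add_cancel (Nat.one_le_iff_ne_zero.2 ho),
        pow_orderOf_eq_one]
    rw [hinv]
    exact hpow _ x x' h


theorem stmt3' {X : Type*} [Finite X] (S : CycleSet X) (α : Equiv.Perm X)
    (hgen : S.permGroup = Subgroup.zpowers α)
    (htr : ∀ x y : X, ∃ g ∈ S.permGroup, g x = y) :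
    (∀ x : X, S.σ ((α ^ Nat.card (Quot (S.rel 1))) x) = S.σ x) ∧
      (∀ n : ℕ, 0 < n → (∀ x : X, S.σ ((α ^ n) x) = S.σ x) →
        Nat.card (Quot (S.rel 1)) ≤ n) := by
  classical
  cases isEmpty_or_nonempty X with
  | inl h =>
    constructor
    · intro x; exact isEmptyElim x
    · intro n hn _
      have : IsEmpty (Quot (S.rel 1)) := ⟨fun q => by induction q using Quot.ind with | _ x => exact isEmptyElim x⟩
      simp [Nat.card_of_isEmpty]
  | inr hne =>
    obtain ⟨x₀⟩ := hne
    have hα : α ∈ S.permGroup := hgen ▸ Subgroup.mem_zpowers α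
    have horbit : ∀ y : X, ∃ k : ℕ, (α ^ k) x₀ = y := by
      intro y
      obtain ⟨g, hg, hgy⟩ := htr x₀ y
      rw [hgen, Subgroup.mem_zpowers_iff] at hg
      obtain ⟨z, rfl⟩ := hg
      refine ⟨(z % (orderOf α : ℤ)).toNat, ?_⟩
      rw [← zpow_natCast, Int.toNat_of_nonneg
        (Int.emod_nonneg z (by exact_mod_cast (orderOf_pos α).ne')), zpow_mod_orderOf]
      exact hgy
    have hrel1 : ∀ x y : X, S.rel 1 x y ↔ S.σ x = S.σ y := by
      intro x y
      constructor
      · intro h; ext z; exact h z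
      · intro h z; show S.σ x z = S.σ y z; rw [h]
    have heq : Equivalence (S.rel 1) :=
      ⟨fun x => (hrel1 x x).2 rfl,
       fun h => (hrel1 _ _).2 ((hrel1 _ _).1 h).symm,
       fun h1 h2 => (hrel1 _ _).2 (((hrel1 _ _).1 h1).trans ((hrel1 _ _).1 h2))⟩
    have hiter : ∀ n : ℕ, (∀ x : X, S.σ ((α ^ n) x) = S.σ x) →
        ∀ j : ℕ, ∀ x : X, S.σ ((α ^ (n * j)) x) = S.σ x := by
      intro n hper j
      induction j with
      | zero => intro x; simp
      | succ j ih =>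
        intro x
        have e : (α ^ (n * (j + 1))) x = (α ^ (n * j)) ((α ^ n) x) := by
          rw [mul_add, mul_one, pow_add]; rfl
        rw [e, ih ((α ^ n) x), hper x]
    have hupper : ∀ n : ℕ, 0 < n → (∀ x : X, S.σ ((α ^ n) x) = S.σ x) →
        Nat.card (Quot (S.rel 1)) ≤ n := by
      intro n hn hper
      have hsurj : Function.Surjective
          (fun j : Fin n => Quot.mk (S.rel 1) ((α ^ (j : ℕ)) x₀)) := by
        intro q
        obtain ⟨y, rfl⟩ := Quot.exists_rep q
        obtain ⟨k, rfl⟩ := horbit y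
        refine ⟨⟨k % n, Nat.mod_lt _ hn⟩, ?_⟩
        apply Quot.sound
        apply (hrel1 _ _).2
        have e : (α ^ k) x₀ = (α ^ (k % n)) ((α ^ (n * (k / n))) x₀) := by
          conv_lhs => rw [← Nat.mod_add_div k n]
          rw [pow_add]; rfl
        rw [e]
        exact key S _ (Subgroup.pow_mem _ hα _) _ _ (hiter n hper (k / n) x₀).symm
      have := Nat.card_le_card_of_surjective _ hsurj
      simpa using this
    have hex : ∃ n, 0 < n ∧ S.σ ((α ^ n) x₀) = S.σ x₀ :=
      ⟨orderOf α, orderOf_pos α, by rw [pow_orderOf_eq_one]; rfl⟩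
    set P := Nat.find hex with hPdef
    have hPspec := Nat.find_spec hex
    have hP0 : 0 < P := hPspec.1
    have hPper : ∀ x : X, S.σ ((α ^ P) x) = S.σ x := by
      intro x
      obtain ⟨k, rfl⟩ := horbit x
      have hk := key S (α ^ k) (Subgroup.pow_mem _ hα k) _ _ hPspec.2
      have hc : (α ^ P) ((α ^ k) x₀) = (α ^ k) ((α ^ P) x₀) := by
        rw [← Equiv.Perm.mul_apply, ← Equiv.Perm.mul_apply, pow_mul_comm]
      rw [hc]; exact hk
    have hclaim : ∀ i j : ℕ, i ≤ j → j < P →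
        S.σ ((α ^ i) x₀) = S.σ ((α ^ j) x₀) → i = j := by
      intro i j hle hlt h
      by_contra hne'
      have hk := key S ((α ^ i)⁻¹) (Subgroup.inv_mem _ (Subgroup.pow_mem _ hα i)) _ _ h
      have e1 : (α ^ i)⁻¹ ((α ^ i) x₀) = x₀ := Equiv.symm_apply_apply _ _
      have e2 : (α ^ i)⁻¹ ((α ^ j) x₀) = (α ^ (j - i)) x₀ := by
        rw [← Equiv.Perm.mul_apply, (Commute.pow_pow_self α i j).inv_left.eq,
          ← pow_sub α hle]
      rw [e1, e2] at hk
      have hlt' : j - i < P := lt_of_le_of_lt (Nat.sub_le _ _) hlt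
      exact Nat.find_min hex hlt' ⟨Nat.sub_pos_of_lt (lt_of_le_of_ne hle hne'), hk.symm⟩
    have hinj : Function.Injective
        (fun j : Fin P => Quot.mk (S.rel 1) ((α ^ (j : ℕ)) x₀)) := by
      intro i j hij
      have h1 : S.σ ((α ^ (i : ℕ)) x₀) = S.σ ((α ^ (j : ℕ)) x₀) :=
        (hrel1 _ _).1 ((heq.eqvGen_iff).1 (Quot.eq.1 hij))
      rcases le_total (i : ℕ) (j : ℕ) with hle | hle
      · exact Fin.ext (hclaim _ _ hle j.isLt h1)
      · exact (Fin.ext (hclaim _ _ hle i.isLt h1.symm)).symm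
    have hlow : P ≤ Nat.card (Quot (S.rel 1)) := by
      have := Nat.card_le_card_of_injective _ hinj
      simpa using this
    have hNP : Nat.card (Quot (S.rel 1)) = P :=
      le_antisymm (hupper P hP0 hPper) hlow
    exact ⟨by rw [hNP]; exact hPper, fun n hn hper => hupper n hn hper⟩

end AuxStmt3

end CycleSet

/-- For a finite indecomposable cycle set with cyclic permutation group
generated by `α`, one has `σ_{α^{|σ(X)|}(x)} = σ_x` for every `x`, and
`|σ(X)|` is the minimal positive integer with this property. -/
theorem stmt3 {X : Type*} [Finite X] (S : CycleSet X) (α : Equiv.Perm X)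
    (hgen : S.permGroup = Subgroup.zpowers α) (htr : S.Transitive) :
    (∀ x : X, S.σ ((α ^ S.retCard 1) x) = S.σ x) ∧
      (∀ n : ℕ, 0 < n → (∀ x : X, S.σ ((α ^ n) x) = S.σ x) →
        S.retCard 1 ≤ n) := by
  have h := CycleSet.AuxStmt3.stmt3' S α hgen htr
  simpa [CycleSet.retCard] using h
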